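/- arXiv:2303.03734 — 2 statements merged into one kernel-verified Lean document; each statement's English description precedes it below -/
import Mathlib

section
/- Let r ≥ 1, g ≥ 1, and let z be a nonzero complex number. Then ∑_{σ ∈ S_r} det(I_r − z⁻¹·A_σ)^{2g} = z^{−2gr} · ∑_{σ ∈ S_r} det(I_r − z·A_σ)^{2g}, where both sums run over all permutations σ of {1,…,r}. -/
/-- For a permutation `σ` of `Fin r`, the associated `r × r` permutation matrix over `ℂ`,
with `(A_σ)_{ij} = 1` if `i = σ j` and `0` otherwise. -/
def permMat (r : ℕ) (σ : Equiv.Perm (Fin r)) : Matrix (Fin r) (Fin r) ℂ :=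
  Matrix.of fun i j => if i = σ j then (1 : ℂ) else 0

lemma permMat_mul (r : ℕ) (σ τ : Equiv.Perm (Fin r)) :
    permMat r σ * permMat r τ = permMat r (σ * τ) := by
  ext i k
  simp [permMat, Matrix.mul_apply, ite_and, Finset.sum_ite_eq, eq_comm]
  split_ifs <;> simp_all

lemma permMat_eq (r : ℕ) (σ : Equiv.Perm (Fin r)) :
    permMat r σ = Equiv.Perm.permMatrix ℂ σ⁻¹ := by
  ext i j
  simp only [permMat, Equiv.Perm.permMatrix, PEquiv.toMatrix, Equiv.toPEquiv,
    Matrix.of_apply, Option.mem_def, Option.some.injEq, Equiv.coe_fn_mk]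
  congr 1
  simp only [PEquiv.coe_mk, Function.comp_apply, Option.some.injEq, eq_iff_iff]
  constructor
  · rintro rfl; simp
  · rintro rfl; simp

lemma det_permMat (r : ℕ) (σ : Equiv.Perm (Fin r)) :
    (permMat r σ).det = (Equiv.Perm.sign σ : ℂ) := by
  rw [permMat_eq, Matrix.det_permutation]
  simp

lemma permMat_one (r : ℕ) : permMat r 1 = 1 := by
  ext i j
  simp [permMat, Matrix.one_apply, eq_comm]
  split_ifs <;> simp_all

/-- Curious Poincaré duality identity:
`∑_{σ ∈ S_r} det(I_r − z⁻¹·A_σ)^{2g} = z^{−2gr} · ∑_{σ ∈ S_r} det(I_r − z·A_σ)^{2g}`. -/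
theorem curious_poincare_duality (r g : ℕ) (hr : 1 ≤ r) (hg : 1 ≤ g) (z : ℂ) (hz : z ≠ 0) :
    ∑ σ : Equiv.Perm (Fin r),
        ((1 : Matrix (Fin r) (Fin r) ℂ) - z⁻¹ • permMat r σ).det ^ (2 * g)
      = z ^ (-(2 * (g : ℤ) * (r : ℤ))) *
        ∑ σ : Equiv.Perm (Fin r),
          ((1 : Matrix (Fin r) (Fin r) ℂ) - z • permMat r σ).det ^ (2 * g) := by
  have key : ∀ σ : Equiv.Perm (Fin r),
      ((1 : Matrix (Fin r) (Fin r) ℂ) - z⁻¹ • permMat r σ).det ^ (2 * g)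
        = z ^ (-(2 * (g : ℤ) * (r : ℤ))) *
          ((1 : Matrix (Fin r) (Fin r) ℂ) - z • permMat r σ⁻¹).det ^ (2 * g) := by
    intro σ
    have hfac : (1 : Matrix (Fin r) (Fin r) ℂ) - z⁻¹ • permMat r σ
        = (-(z⁻¹) • permMat r σ) * (1 - z • permMat r σ⁻¹) := by
      rw [Matrix.smul_mul, Matrix.mul_sub, Matrix.mul_one, Matrix.mul_smul, permMat_mul,
        mul_inv_cancel, permMat_one, smul_sub, smul_smul, neg_mul, neg_smul, neg_smul,
        inv_mul_cancel₀ hz, one_smul, sub_neg_eq_add, neg_add_eq_sub]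
    rw [hfac, Matrix.det_mul, Matrix.det_smul, det_permMat, Fintype.card_fin, mul_pow, mul_pow]
    have h1 : ((-z⁻¹) ^ r) ^ (2 * g) = z ^ (-(2 * (g : ℤ) * (r : ℤ))) := by
      rw [← pow_mul, Even.neg_pow ⟨r * g, by ring⟩, inv_pow, ← zpow_natCast, ← zpow_neg]
      congr 1
      push_cast
      ring
    have h2 : ((Equiv.Perm.sign σ : ℤ) : ℂ) ^ (2 * g) = 1 := by
      rw [pow_mul]
      rcases Int.units_eq_one_or (Equiv.Perm.sign σ) with h | h <;> simp [h]
    rw [h1, h2, mul_one]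
  rw [Finset.sum_congr rfl fun σ _ => key σ, ← Finset.mul_sum]
  congr 1
  exact Fintype.sum_equiv (Equiv.inv (Equiv.Perm (Fin r))) _ _ fun σ => rfl
end

section
/- Let g, r ≥ 1 and let λ_1,…,λ_r and μ_1,…,μ_r be vectors in ℂ^g. Suppose that for every u ∈ ℂ^g the multiset {⟨u,λ_1⟩,…,⟨u,λ_r⟩} of complex numbers equals the multiset {⟨u,μ_1⟩,…,⟨u,μ_r⟩}, where ⟨u,v⟩ = ∑_{j=1}^g u_j v_j. Then the multiset {λ_1,…,λ_r} of vectors equals the multiset {μ_1,…,μ_r}; that is, there is a permutation σ of {1,…,r} with μ_i = λ_{σ(i)} for all i. -/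
private lemma perm_of_multiset_map_eq {α : Type*} : ∀ {r : ℕ} (f g : Fin r → α),
    Multiset.map f Finset.univ.val = Multiset.map g Finset.univ.val →
    ∃ σ : Equiv.Perm (Fin r), ∀ i, g i = f (σ i) := by
  intro r
  induction r with
  | zero => exact fun f g _ => ⟨1, fun i => i.elim0⟩
  | succ r ih =>
    intro f g hm
    have h0 : g 0 ∈ Multiset.map f Finset.univ.val := by
      rw [hm]
      exact Multiset.mem_map.mpr ⟨0, Finset.mem_univ_val 0, rfl⟩
    obtain ⟨k, -, hk⟩ := Multiset.mem_map.mp h0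
    have huk : (Finset.univ : Finset (Fin (r+1))).val
        = k ::ₘ Multiset.map k.succAbove Finset.univ.val := by
      rw [Fin.univ_succAbove r k, Finset.cons_val, Finset.map_val]
      rfl
    have hu0 : (Finset.univ : Finset (Fin (r+1))).val
        = (0 : Fin (r+1)) ::ₘ Multiset.map Fin.succ Finset.univ.val := by
      rw [Fin.univ_succAbove r 0, Finset.cons_val, Finset.map_val]
      simp only [Fin.coe_succAboveEmb, Fin.succAbove_zero]
    have key : Multiset.map (f ∘ k.succAbove) Finset.univ.val
        = Multiset.map (g ∘ Fin.succ) Finset.univ.val := by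
      have h1 : f k ::ₘ Multiset.map (f ∘ k.succAbove) Finset.univ.val
          = g 0 ::ₘ Multiset.map (g ∘ Fin.succ) Finset.univ.val := by
        rw [← Multiset.map_map, ← Multiset.map_map, ← Multiset.map_cons, ← Multiset.map_cons,
          ← huk, ← hu0]
        exact hm
      rw [hk] at h1
      exact (Multiset.cons_inj_right _).mp h1
    obtain ⟨σ', hσ'⟩ := ih (f ∘ k.succAbove) (g ∘ Fin.succ) key
    refine ⟨((finSuccEquiv r).trans (σ'.optionCongr)).trans (finSuccEquiv' k).symm, fun i => ?_⟩
    refine Fin.cases ?_ (fun j => ?_) i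
    · simp [hk.symm]
    · simpa using hσ' j

private noncomputable def evalL (g : ℕ) (c : Fin g → ℂ) : (Fin g → ℂ) →ₗ[ℂ] ℂ where
  toFun u := ∑ j, u j * c j
  map_add' u v := by simp [add_mul, Finset.sum_add_distrib]
  map_smul' a u := by simp [Finset.mul_sum, mul_assoc]

private lemma evalL_ne_zero {g : ℕ} {c : Fin g → ℂ} (hc : c ≠ 0) : evalL g c ≠ 0 := by
  obtain ⟨j, hj⟩ := Function.ne_iff.mp hc
  intro h0
  have := congrArg (fun L : (Fin g → ℂ) →ₗ[ℂ] ℂ => L (Pi.single j 1)) h0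
  simp only [evalL, LinearMap.coe_mk, AddHom.coe_mk, LinearMap.zero_apply] at this
  rw [Finset.sum_eq_single j (fun b _ hb => by simp [Pi.single_apply, hb.symm])
    (fun hb => absurd (Finset.mem_univ j) hb)] at this
  simp at this
  exact hj this


/-- If two unordered `r`-tuples of vectors `λ, μ` in `ℂ^g` have, for every `u ∈ ℂ^g`, the same
multiset of linear-form evaluations `{⟨u, λ_i⟩} = {⟨u, μ_i⟩}` (with `⟨u,v⟩ = ∑_j u_j v_j`),
then they agree as multisets of vectors: there is a permutation `σ` of `{1, …, r}` with
`μ_i = λ_{σ(i)}` for all `i`. -/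
theorem multiset_eq_of_forall_eval_multiset_eq (g r : ℕ) (hg : 1 ≤ g) (hr : 1 ≤ r)
    (lam mu : Fin r → (Fin g → ℂ))
    (h : ∀ u : Fin g → ℂ,
      Multiset.map (fun i => ∑ j, u j * lam i j) Finset.univ.val =
        Multiset.map (fun i => ∑ j, u j * mu i j) Finset.univ.val) :
    ∃ σ : Equiv.Perm (Fin r), ∀ i, mu i = lam (σ i) := by
  classical
  set ev : (Fin g → ℂ) → (Fin g → ℂ) → ℂ := fun u v => ∑ j, u j * v j with hev
  set T : Finset (Fin g → ℂ) := Finset.univ.image lam ∪ Finset.univ.image mu with hT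
  set s : Finset (Subspace ℂ (Fin g → ℂ)) :=
    ((T ×ˢ T).filter fun p => p.1 ≠ p.2).image fun p => LinearMap.ker (evalL g (p.1 - p.2))
    with hs
  have htop : ⊤ ∉ s := by
    intro hmem
    obtain ⟨p, hp, hker⟩ := Finset.mem_image.mp hmem
    have hne : p.1 - p.2 ≠ 0 := sub_ne_zero.mpr (Finset.mem_filter.mp hp).2
    exact evalL_ne_zero hne (LinearMap.ker_eq_top.mp hker)
  obtain ⟨u, hu⟩ :=
    (Set.ne_univ_iff_exists_notMem _).mp (Subspace.biUnion_ne_univ_of_top_notMem htop)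
  simp only [Set.mem_iUnion, not_exists, SetLike.mem_coe] at hu
  have hinj : ∀ v ∈ T, ∀ w ∈ T, ev u v = ev u w → v = w := by
    intro v hv w hw hvw
    by_contra hne
    have hm : LinearMap.ker (evalL g (v - w)) ∈ s :=
      Finset.mem_image.mpr ⟨(v, w), Finset.mem_filter.mpr ⟨Finset.mk_mem_product hv hw, hne⟩, rfl⟩
    refine hu _ hm ?_
    rw [LinearMap.mem_ker]
    show ∑ j, u j * (v - w) j = 0
    simp only [Pi.sub_apply, mul_sub, Finset.sum_sub_distrib]
    rw [show (∑ j, u j * v j) = ev u v from rfl, show (∑ j, u j * w j) = ev u w from rfl, hvw,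
      sub_self]
  have hinjOn : Set.InjOn (ev u) ↑T := fun v hv w hw => hinj v hv w hw
  have hleft := hinjOn.leftInvOn_invFunOn
  set inv := Function.invFunOn (ev u) ↑T with hinv
  have hlamT : ∀ i, lam i ∈ T := fun i =>
    Finset.mem_union_left _ (Finset.mem_image_of_mem lam (Finset.mem_univ i))
  have hmuT : ∀ i, mu i ∈ T := fun i =>
    Finset.mem_union_right _ (Finset.mem_image_of_mem mu (Finset.mem_univ i))
  have hA : Multiset.map lam Finset.univ.val = Multiset.map mu Finset.univ.val := by
    have e1 : Multiset.map lam Finset.univ.val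
        = Multiset.map (fun i => inv (ev u (lam i))) Finset.univ.val :=
      Multiset.map_congr rfl (fun i _ => (hleft (hlamT i)).symm)
    have e2 : Multiset.map mu Finset.univ.val
        = Multiset.map (fun i => inv (ev u (mu i))) Finset.univ.val :=
      Multiset.map_congr rfl (fun i _ => (hleft (hmuT i)).symm)
    rw [e1, e2, show (fun i => inv (ev u (lam i))) = inv ∘ (fun i => ev u (lam i)) from rfl,
      show (fun i => inv (ev u (mu i))) = inv ∘ (fun i => ev u (mu i)) from rfl,
      ← Multiset.map_map, ← Multiset.map_map]
    congr 1
    exact h u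
  exact perm_of_multiset_map_eq lam mu hA
end
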